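/- arXiv:1904.13388 — 6 statements merged into one kernel-verified Lean document; each statement's English description precedes it below -/
import Mathlib

section
/- For a quandle Q the following are equivalent: (i) for every a ∈ Q, the only fixed point of the left multiplication L_a is a itself; (ii) Q has no projection subquandle with more than one element; (iii) every subquandle of Q, with the restricted operation, is faithful. -/
universe u v

/-- A quandle structure on a type `Q`: each left multiplication `L a : b ↦ op a b`
is a bijection (with inverse `invOp a`), the operation is left self-distributive,
and every element is idempotent. -/
structure QuandleStr (Q : Type u) where
  op : Q → Q → Q
  invOp : Q → Q → Q
  inv_op : ∀ a b, invOp a (op a b) = b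
  op_inv : ∀ a b, op a (invOp a b) = b
  self_distrib : ∀ a b c, op a (op b c) = op (op a b) (op a c)
  op_self : ∀ a, op a a = a

namespace QuandleStr

variable {Q : Type u} (S : QuandleStr Q)

/-- Left multiplication as a permutation of `Q`. -/
def L (a : Q) : Equiv.Perm Q where
  toFun := S.op a
  invFun := S.invOp a
  left_inv := S.inv_op a
  right_inv := S.op_inv a

/-- The left multiplication group `LMlt(Q)`. -/
def LMlt : Subgroup (Equiv.Perm Q) := Subgroup.closure (Set.range S.L)

/-- The displacement group `Dis(Q)`, generated by `L a * (L b)⁻¹`. -/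
def Dis : Subgroup (Equiv.Perm Q) :=
  Subgroup.closure { g : Equiv.Perm Q | ∃ a b : Q, g = S.L a * (S.L b)⁻¹ }

/-- `Q` is connected if `Dis(Q)` acts transitively. -/
def IsConnected : Prop := ∀ a b : Q, ∃ g ∈ S.Dis, g a = b

/-- `Q` is semiregular if the stabilizer in `Dis(Q)` of every point is trivial. -/
def IsSemiregular : Prop := ∀ g ∈ S.Dis, ∀ x : Q, g x = x → g = 1

/-- `Q` is faithful if `a ↦ L a` is injective. -/
def IsFaithful : Prop := ∀ a b : Q, (∀ c : Q, S.op a c = S.op b c) → a = b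

/-- `Q` is latin if every right multiplication is bijective. -/
def IsLatin : Prop := ∀ a : Q, Function.Bijective (fun b => S.op b a)

/-- `Q` is a crossed set if `a*b = b` implies `b*a = a`. -/
def IsCrossedSet : Prop := ∀ a b : Q, S.op a b = b → S.op b a = a

/-- A subquandle: a nonempty subset closed under the operation and left division. -/
def IsSubquandle (A : Set Q) : Prop :=
  A.Nonempty ∧ (∀ a ∈ A, ∀ b ∈ A, S.op a b ∈ A) ∧ (∀ a ∈ A, ∀ b ∈ A, S.invOp a b ∈ A)

/-- The automorphism group of the quandle, as a subgroup of `Equiv.Perm Q`. -/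
def autGroup : Subgroup (Equiv.Perm Q) where
  carrier := { h : Equiv.Perm Q | ∀ a b : Q, h (S.op a b) = S.op (h a) (h b) }
  one_mem' := by intro a b; rfl
  mul_mem' := by
    intro g h hg hh a b
    show g (h (S.op a b)) = S.op (g (h a)) (g (h b))
    rw [hh, hg]
  inv_mem' := by
    intro g hg a b
    apply g.injective
    rw [hg]
    simp

/-- `Q` is doubly homogeneous if `Aut(Q)` acts 2-transitively. -/
def IsDoublyHomogeneous : Prop :=
  ∀ a b c d : Q, a ≠ b → c ≠ d → ∃ h ∈ S.autGroup, h a = c ∧ h b = d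

/-- The restriction of the quandle structure to a subset closed under both operations. -/
def restrict (A : Set Q) (h1 : ∀ a ∈ A, ∀ b ∈ A, S.op a b ∈ A)
    (h2 : ∀ a ∈ A, ∀ b ∈ A, S.invOp a b ∈ A) : QuandleStr A where
  op a b := ⟨S.op a b, h1 a a.2 b b.2⟩
  invOp a b := ⟨S.invOp a b, h2 a a.2 b b.2⟩
  inv_op a b := Subtype.ext (S.inv_op a b)
  op_inv a b := Subtype.ext (S.op_inv a b)
  self_distrib a b c := Subtype.ext (S.self_distrib a b c)
  op_self a := Subtype.ext (S.op_self a)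

/-- The stabilizer of a point in the displacement group, as a set of permutations. -/
def disStab (x : Q) : Set (Equiv.Perm Q) := { g : Equiv.Perm Q | g ∈ S.Dis ∧ g x = x }

/-- The class of `a` under the relation `σ_Q`: elements with the same stabilizer in `Dis(Q)`. -/
def sigmaClass (a : Q) : Set Q := { b : Q | S.disStab b = S.disStab a }

/-- A quandle is strictly simple if it has at least two elements and no proper subquandle. -/
def IsStrictlySimple : Prop :=
  (∃ a b : Q, a ≠ b) ∧
    ∀ A : Set Q, S.IsSubquandle A → (∀ a ∈ A, ∀ b ∈ A, a = b) ∨ A = Set.univ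

/-- A subset which is a strictly simple subquandle (with the restricted operation). -/
def IsStrictlySimpleSub (A : Set Q) : Prop :=
  S.IsSubquandle A ∧ (∃ a ∈ A, ∃ b ∈ A, a ≠ b) ∧
    ∀ B : Set Q, B ⊆ A → S.IsSubquandle B → (∀ x ∈ B, ∀ y ∈ B, x = y) ∨ B = A

/-- A congruence of a quandle. -/
structure IsCongruence (r : Q → Q → Prop) : Prop where
  refl : ∀ a, r a a
  symm : ∀ {a b}, r a b → r b a
  trans : ∀ {a b c}, r a b → r b c → r a c
  op_compat : ∀ {a b c d}, r a b → r c d → r (S.op a c) (S.op b d)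
  invOp_compat : ∀ {a b c d}, r a b → r c d → r (S.invOp a c) (S.invOp b d)

/-- A quandle is simple if it has at least two elements and its only congruences are
the equality relation and the all relation. -/
def IsSimple : Prop :=
  (∃ a b : Q, a ≠ b) ∧
    ∀ r : Q → Q → Prop, S.IsCongruence r → (∀ a b, r a b ↔ a = b) ∨ (∀ a b, r a b)

end QuandleStr

/-- The product of a family of quandles, with componentwise operation. -/
def piQuandle {I : Type u} {Q : I → Type v} (S : ∀ i, QuandleStr (Q i)) :
    QuandleStr (∀ i, Q i) where
  op a b := fun i => (S i).op (a i) (b i)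
  invOp a b := fun i => (S i).invOp (a i) (b i)
  inv_op a b := funext fun i => (S i).inv_op (a i) (b i)
  op_inv a b := funext fun i => (S i).op_inv (a i) (b i)
  self_distrib a b c := funext fun i => (S i).self_distrib (a i) (b i) (c i)
  op_self a := funext fun i => (S i).op_self (a i)

/-- The principal quandle `Q_Hom(G, f)` over a group `G` with automorphism `f`:
the underlying set is `G` with `a * b = a · f(a⁻¹ b)`. -/
def principalQuandle {G : Type u} [Group G] (f : G ≃* G) : QuandleStr G where
  op a b := a * f (a⁻¹ * b)
  invOp a b := a * f.symm (a⁻¹ * b)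
  inv_op a b := by simp
  op_inv a b := by simp
  self_distrib a b c := by
    simp only [map_mul, map_inv, mul_inv_rev, mul_assoc, inv_mul_cancel_left,
      mul_inv_cancel_left, inv_inv]
  op_self a := by simp

/-- The affine quandle `Aff(A, f)` over an abelian group `A` with automorphism `f`:
the underlying set is `A` with `a * b = a - f a + f b`. -/
def affineQuandle {A : Type u} [AddCommGroup A] (f : A ≃+ A) : QuandleStr A where
  op a b := a - f a + f b
  invOp a b := f.symm (b - a + f a)
  inv_op a b := by
    try dsimp only
    have h : (a - f a + f b) - a + f a = f b := by abel
    rw [h, f.symm_apply_apply]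
  op_inv a b := by
    try dsimp only
    rw [f.apply_symm_apply]
    abel
  self_distrib a b c := by
    try dsimp only
    simp only [map_add, map_sub]
    abel
  op_self a := by
    try dsimp only
    rw [sub_add_cancel]

/-- A witness that a quandle is principal: a group `G`, an automorphism `f`, and a
quandle isomorphism with `Q_Hom(G, f)`. -/
structure PrincipalWitness {Q : Type u} (S : QuandleStr Q) : Type (u + 1) where
  G : Type u
  [grp : Group G]
  f : G ≃* G
  e : Q ≃ G
  hop : ∀ a b : Q, e (S.op a b) = (principalQuandle f).op (e a) (e b)

/-- A quandle is principal if it is isomorphic to some `Q_Hom(G, f)`. -/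
def IsPrincipal {Q : Type u} (S : QuandleStr Q) : Prop := Nonempty (PrincipalWitness S)

section Aux

variable {Q : Type u} (S : QuandleStr Q)

lemma aux_inv_apply (b x : Q) : ((S.L b)⁻¹ : Equiv.Perm Q) x = S.invOp b x := rfl

lemma aux_invOp_op_distrib (b x y : Q) :
    S.invOp b (S.op x y) = S.op (S.invOp b x) (S.invOp b y) := by
  have h := S.self_distrib b (S.invOp b x) (S.invOp b y)
  rw [S.op_inv, S.op_inv] at h
  rw [← h, S.inv_op]

lemma aux_op_invOp_distrib (a x y : Q) :
    S.op a (S.invOp x y) = S.invOp (S.op a x) (S.op a y) := by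
  have h := S.self_distrib a x (S.invOp x y)
  rw [S.op_inv] at h
  rw [h, S.inv_op]

lemma aux_zpow_op (b : Q) : ∀ n : ℤ, ∀ x y : Q,
    ((S.L b) ^ n : Equiv.Perm Q) (S.op x y)
      = S.op (((S.L b) ^ n : Equiv.Perm Q) x) (((S.L b) ^ n : Equiv.Perm Q) y) := by
  intro n
  induction n using Int.induction_on with
  | zero => intro x y; simp
  | succ n ih =>
    intro x y
    have hrw : ((S.L b) ^ ((n : ℤ) + 1) : Equiv.Perm Q)
        = (S.L b) * ((S.L b) ^ (n : ℤ)) := by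
      rw [add_comm, zpow_add, zpow_one]
    simp only [hrw, Equiv.Perm.mul_apply]
    rw [ih]
    exact S.self_distrib b _ _
  | pred n ih =>
    intro x y
    have hrw : ((S.L b) ^ (-(n : ℤ) - 1) : Equiv.Perm Q)
        = (S.L b)⁻¹ * ((S.L b) ^ (-(n : ℤ))) := by
      rw [show (-(n : ℤ) - 1) = (-1) + (-(n : ℤ)) by omega, zpow_add, zpow_neg_one]
    simp only [hrw, Equiv.Perm.mul_apply]
    rw [ih x y, aux_inv_apply, aux_inv_apply, aux_inv_apply]
    exact aux_invOp_op_distrib S b _ _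

end Aux

/-- For a quandle `Q` the following are equivalent:
(i) for every `a ∈ Q` the only fixed point of `L a` is `a` itself;
(ii) `Q` has no projection subquandle with more than one element;
(iii) every subquandle of `Q`, with the restricted operation, is faithful. -/
theorem statement0 {Q : Type u} (S : QuandleStr Q) :
    List.TFAE
      [ ∀ a b : Q, S.op a b = b → b = a,
        ∀ A : Set Q, S.IsSubquandle A → (∀ x ∈ A, ∀ y ∈ A, S.op x y = y) →
          ∀ x ∈ A, ∀ y ∈ A, x = y,
        ∀ A : Set Q, S.IsSubquandle A →
          ∀ a ∈ A, ∀ b ∈ A, (∀ c ∈ A, S.op a c = S.op b c) → a = b ] := by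
  tfae_have 1 → 3 := by
    intro h1 A hA a ha b hb hab
    have : S.op a b = b := by rw [hab b hb, S.op_self]
    exact (h1 a b this).symm
  tfae_have 3 → 2 := by
    intro h3 A hA hproj x hx y hy
    refine h3 A hA x hx y hy fun c hc => ?_
    rw [hproj x hx c hc, hproj y hy c hc]
  tfae_have 2 → 1 := by
    intro h2 a b hab
    -- Step 1: show `S.op b a = a` using the orbit of `a` under powers of `L b`.
    set f : ℤ → Q := fun n => ((S.L b) ^ n : Equiv.Perm Q) a with hf
    have hfix : ∀ n : ℤ, S.op a (f n) = f n := by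
      intro n
      induction n using Int.induction_on with
      | zero => simpa [hf] using S.op_self a
      | succ n ih =>
        have hstep : f ((n : ℤ) + 1) = S.op b (f n) := by
          simp only [hf]
          rw [show ((n : ℤ) + 1) = 1 + (n : ℤ) by omega, zpow_add, zpow_one,
            Equiv.Perm.mul_apply]
          rfl
        rw [hstep, S.self_distrib, hab, ih]
      | pred n ih =>
        have hstep : f (-(n : ℤ) - 1) = S.invOp b (f (-(n : ℤ))) := by
          simp only [hf]
          rw [show (-(n : ℤ) - 1) = (-1) + (-(n : ℤ)) by omega, zpow_add,
            zpow_neg_one, Equiv.Perm.mul_apply, aux_inv_apply]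
        rw [hstep, aux_op_invOp_distrib, hab, ih]
    have hproj : ∀ m n : ℤ, S.op (f m) (f n) = f n := by
      intro m n
      have hdecomp : f n = ((S.L b) ^ m : Equiv.Perm Q) (f (n - m)) := by
        simp only [hf]
        rw [← Equiv.Perm.mul_apply, ← zpow_add]
        norm_num
      rw [hdecomp]
      have := aux_zpow_op S b m a (f (n - m))
      simp only [hf] at this ⊢
      rw [← this, hfix (n - m)]
    have hA : S.IsSubquandle (Set.range f) := by
      refine ⟨⟨f 0, ⟨0, rfl⟩⟩, ?_, ?_⟩
      · rintro x ⟨m, rfl⟩ y ⟨n, rfl⟩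
        rw [hproj m n]
        exact ⟨n, rfl⟩
      · rintro x ⟨m, rfl⟩ y ⟨n, rfl⟩
        have : S.invOp (f m) (f n) = f n := by
          conv_lhs => rw [← hproj m n]
          rw [S.inv_op]
        rw [this]
        exact ⟨n, rfl⟩
    have hall := h2 (Set.range f) hA
      (by rintro x ⟨m, rfl⟩ y ⟨n, rfl⟩; exact hproj m n)
    have hf10 : f 1 = f 0 := hall (f 1) ⟨1, rfl⟩ (f 0) ⟨0, rfl⟩
    have hf1 : f 1 = S.op b a := by simp [hf]; rfl
    have hf0 : f 0 = a := by simp [hf]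
    have hba : S.op b a = a := by rw [← hf1, hf10, hf0]
    -- Step 2: `{a, b}` is a projection subquandle, so `a = b`.
    have hmem : ∀ x ∈ ({a, b} : Set Q), ∀ y ∈ ({a, b} : Set Q), S.op x y = y := by
      rintro x (rfl | rfl) y (rfl | rfl)
      · exact S.op_self _
      · exact hab
      · exact hba
      · exact S.op_self _
    have hB : S.IsSubquandle ({a, b} : Set Q) := by
      refine ⟨⟨a, Or.inl rfl⟩, ?_, ?_⟩
      · intro x hx y hy
        rw [hmem x hx y hy]; exact hy
      · intro x hx y hy
        have : S.invOp x y = y := by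
          conv_lhs => rw [← hmem x hx y hy]
          rw [S.inv_op]
        rw [this]; exact hy
    exact (h2 ({a, b} : Set Q) hB hmem b (Or.inr rfl) a (Or.inl rfl))
  tfae_finish
end

section
/- Let Q be a quandle and a ∈ Q. Then the σ_Q-class [a] = {b ∈ Q : Dis(Q)_b = Dis(Q)_a} is a subquandle of Q; this subquandle, with the restricted operation, is a semiregular quandle; and for every automorphism h of Q and every b ∈ Q, if b σ_Q a then h(b) σ_Q h(a) (so automorphisms of Q permute the σ_Q-classes). -/
universe u v

namespace QuandleStr

variable {Q : Type u} (S : QuandleStr Q)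

@[simp] lemma L_apply' (a b : Q) : S.L a b = S.op a b := rfl
@[simp] lemma L_inv_apply' (a b : Q) : (S.L a)⁻¹ b = S.invOp a b := rfl

lemma invOp_self (x : Q) : S.invOp x x = x := by
  have h := S.inv_op x x
  rwa [S.op_self] at h

lemma L_conj (x c : Q) : S.L x * S.L c * (S.L x)⁻¹ = S.L (S.op x c) := by
  ext e
  simp only [Equiv.Perm.mul_apply, L_apply', L_inv_apply']
  rw [S.self_distrib, S.op_inv]

lemma L_inv_conj (x c : Q) : (S.L x)⁻¹ * S.L c * S.L x = S.L (S.invOp x c) := by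
  have h := S.L_conj x (S.invOp x c)
  rw [S.op_inv] at h
  rw [← h]
  group

lemma conj_mem_Dis (f : Equiv.Perm Q) (hf : ∀ c, ∃ d, f * S.L c * f⁻¹ = S.L d)
    {g : Equiv.Perm Q} (hg : g ∈ S.Dis) : f * g * f⁻¹ ∈ S.Dis := by
  have hle : S.Dis ≤ Subgroup.comap (MulAut.conj f).toMonoidHom S.Dis := by
    rw [Dis, Subgroup.closure_le]
    rintro g ⟨p, q, rfl⟩
    obtain ⟨dp, hp⟩ := hf p
    obtain ⟨dq, hq⟩ := hf q
    show (MulAut.conj f) (S.L p * (S.L q)⁻¹) ∈ S.Dis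
    have heq : (MulAut.conj f) (S.L p * (S.L q)⁻¹) = S.L dp * (S.L dq)⁻¹ := by
      rw [← hp, ← hq]
      simp [MulAut.conj_apply, mul_assoc]
    rw [heq]
    exact Subgroup.subset_closure ⟨dp, dq, rfl⟩
  exact hle hg

lemma disStab_apply_eq (f : Equiv.Perm Q)
    (hf1 : ∀ c, ∃ d, f * S.L c * f⁻¹ = S.L d)
    (hf2 : ∀ c, ∃ d, f⁻¹ * S.L c * f = S.L d)
    {x y : Q} (hxy : S.disStab x = S.disStab y) :
    S.disStab (f x) = S.disStab (f y) := by
  have key : ∀ z : Q, ∀ g : Equiv.Perm Q,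
      g ∈ S.disStab (f z) ↔ f⁻¹ * g * f ∈ S.disStab z := by
    intro z g
    constructor
    · rintro ⟨hgD, hgz⟩
      refine ⟨?_, ?_⟩
      · have := S.conj_mem_Dis f⁻¹ (by simpa using hf2) hgD
        simpa using this
      · simp [Equiv.Perm.mul_apply, hgz]
    · rintro ⟨hgD, hgz⟩
      have hD : g ∈ S.Dis := by
        have := S.conj_mem_Dis f hf1 hgD
        have heq : f * (f⁻¹ * g * f) * f⁻¹ = g := by group
        rwa [heq] at this
      refine ⟨hD, ?_⟩
      have : f⁻¹ (g (f z)) = z := hgz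
      have := congrArg f this
      simpa using this
  ext g
  show g ∈ S.disStab (f x) ↔ g ∈ S.disStab (f y)
  rw [key x g, key y g, hxy]

lemma Lconj1 (x : Q) : ∀ c, ∃ d, S.L x * S.L c * (S.L x)⁻¹ = S.L d :=
  fun c => ⟨_, S.L_conj x c⟩

lemma Lconj2 (x : Q) : ∀ c, ∃ d, (S.L x)⁻¹ * S.L c * S.L x = S.L d :=
  fun c => ⟨_, S.L_inv_conj x c⟩

end QuandleStr

/-- The `σ_Q`-class of `a` is a subquandle of `Q`; with the restricted
operation it is a semiregular quandle; and every automorphism of `Q` maps the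
`σ_Q`-class of `a` into the `σ_Q`-class of `h a`. -/
theorem statement1 {Q : Type u} (S : QuandleStr Q) (a : Q) :
    S.IsSubquandle (S.sigmaClass a) ∧
    (∀ (h1 : ∀ x ∈ S.sigmaClass a, ∀ y ∈ S.sigmaClass a, S.op x y ∈ S.sigmaClass a)
       (h2 : ∀ x ∈ S.sigmaClass a, ∀ y ∈ S.sigmaClass a, S.invOp x y ∈ S.sigmaClass a),
       (S.restrict (S.sigmaClass a) h1 h2).IsSemiregular) ∧
    (∀ h ∈ S.autGroup, ∀ b : Q, b ∈ S.sigmaClass a → h b ∈ S.sigmaClass (h a)) := by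
  constructor
  · refine ⟨⟨a, rfl⟩, ?_, ?_⟩
    · intro x hx y hy
      have hxy : S.disStab y = S.disStab x := hy.trans hx.symm
      have h := S.disStab_apply_eq (S.L x) (S.Lconj1 x) (S.Lconj2 x) hxy
      have hxx : S.L x x = x := S.op_self x
      show S.disStab (S.op x y) = S.disStab a
      calc S.disStab (S.op x y) = S.disStab (S.L x x) := h
        _ = S.disStab x := by rw [hxx]
        _ = S.disStab a := hx
    · intro x hx y hy
      have hxy : S.disStab y = S.disStab x := hy.trans hx.symm
      have h := S.disStab_apply_eq (S.L x)⁻¹ (by simpa using S.Lconj2 x)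
        (by simpa using S.Lconj1 x) hxy
      have hxx : (S.L x)⁻¹ x = x := S.invOp_self x
      show S.disStab (S.invOp x y) = S.disStab a
      calc S.disStab (S.invOp x y) = S.disStab ((S.L x)⁻¹ x) := h
        _ = S.disStab x := by rw [hxx]
        _ = S.disStab a := hx
  constructor
  · intro h1 h2
    set A := S.sigmaClass a with hA
    set T := S.restrict A h1 h2 with hT
    intro g hg x hgx
    let K : Subgroup (Equiv.Perm A) :=
      { carrier := {p | ∃ p' ∈ S.Dis, ∀ y : A, p' (y : Q) = ((p y : A) : Q)}
        one_mem' := ⟨1, one_mem _, fun y => rfl⟩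
        mul_mem' := by
          rintro p q ⟨p', hp', hpl⟩ ⟨q', hq', hql⟩
          exact ⟨p' * q', mul_mem hp' hq', fun y => by
            simp only [Equiv.Perm.mul_apply]
            rw [hql, hpl]⟩
        inv_mem' := by
          rintro p ⟨p', hp', hpl⟩
          refine ⟨p'⁻¹, inv_mem hp', fun y => ?_⟩
          apply p'.injective
          rw [Equiv.Perm.coe_inv, Equiv.apply_symm_apply, hpl, Equiv.Perm.coe_inv, Equiv.apply_symm_apply] }
    have hsub : T.Dis ≤ K := by
      rw [QuandleStr.Dis, Subgroup.closure_le]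
      rintro p ⟨u, v, rfl⟩
      refine ⟨S.L (u : Q) * (S.L (v : Q))⁻¹,
        Subgroup.subset_closure ⟨(u : Q), (v : Q), rfl⟩, fun y => ?_⟩
      rfl
    obtain ⟨g', hg'D, hg'⟩ := hsub hg
    have hgx' : g' (x : Q) = (x : Q) := by rw [hg', hgx]
    have hstab : g' ∈ S.disStab (x : Q) := ⟨hg'D, hgx'⟩
    have hstaba : g' ∈ S.disStab a := by rw [← x.2]; exact hstab
    ext y
    have hy : g' ∈ S.disStab (y : Q) := by rw [y.2]; exact hstaba
    have : ((g y : A) : Q) = (y : Q) := by rw [← hg' y, hy.2]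
    exact this
  · intro h hh b hb
    have hf1 : ∀ c, ∃ d, h * S.L c * h⁻¹ = S.L d := by
      intro c
      refine ⟨h c, ?_⟩
      ext e
      simp only [Equiv.Perm.mul_apply, QuandleStr.L_apply']
      rw [hh, Equiv.Perm.coe_inv, Equiv.apply_symm_apply]
    have hh' : h⁻¹ ∈ S.autGroup := S.autGroup.inv_mem hh
    have hf2 : ∀ c, ∃ d, h⁻¹ * S.L c * h = S.L d := by
      intro c
      refine ⟨h⁻¹ c, ?_⟩
      ext e
      simp only [Equiv.Perm.mul_apply, QuandleStr.L_apply']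
      rw [hh', Equiv.Perm.coe_inv, Equiv.symm_apply_apply]
    exact S.disStab_apply_eq h hf1 hf2 hb
end

section
/- Let Q be a semiregular quandle. Then Q is a crossed set, and the following are equivalent: (i) Q is faithful; (ii) Q has no projection subquandle with more than one element; (iii) every right multiplication R_a : b ↦ b*a is injective. -/
universe u v

lemma QuandleStr.L_eq_of_eq_at {Q : Type u} (S : QuandleStr Q)
    (hsr : S.IsSemiregular) {a b x : Q} (h : S.op a x = S.op b x) :
    ∀ c, S.op a c = S.op b c := by
  have hmem : S.L a * (S.L b)⁻¹ ∈ S.Dis := Subgroup.subset_closure ⟨a, b, rfl⟩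
  have hfix : (S.L a * (S.L b)⁻¹) (S.L b x) = S.L b x := by
    have hinv : (S.L b)⁻¹ (S.L b x) = x := Equiv.symm_apply_apply (S.L b) x
    show (S.L a) ((S.L b)⁻¹ (S.L b x)) = S.L b x
    rw [hinv]
    exact h
  have h1 : S.L a * (S.L b)⁻¹ = 1 := hsr _ hmem _ hfix
  have h2 : S.L a = S.L b := mul_inv_eq_one.mp h1
  intro c
  show S.L a c = S.L b c
  rw [h2]

/-- A semiregular quandle is a crossed set, and the following are
equivalent: (i) `Q` is faithful; (ii) `Q` has no projection subquandle with more
than one element; (iii) every right multiplication is injective. -/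
theorem statement2 {Q : Type u} (S : QuandleStr Q) (hsr : S.IsSemiregular) :
    S.IsCrossedSet ∧
    List.TFAE
      [ S.IsFaithful,
        ∀ A : Set Q, S.IsSubquandle A → (∀ x ∈ A, ∀ y ∈ A, S.op x y = y) →
          ∀ x ∈ A, ∀ y ∈ A, x = y,
        ∀ a : Q, Function.Injective (fun b => S.op b a) ] := by
  constructor
  · intro a b hab
    have h : S.op a b = S.op b b := by rw [hab, S.op_self]
    have hL := S.L_eq_of_eq_at hsr h
    rw [← hL a, S.op_self]
  · tfae_have 1 → 2 := by
      intro hf A hA hproj x hx y hy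
      have h : S.op x y = S.op y y := by rw [hproj x hx y hy, S.op_self]
      exact hf x y (S.L_eq_of_eq_at hsr h)
    tfae_have 2 → 1 := by
      intro h2 a b hab
      set A : Set Q := { c : Q | ∀ d, S.op c d = S.op a d } with hAdef
      have hbA : b ∈ A := fun d => (hab d).symm
      have haA : a ∈ A := fun d => rfl
      have hsub : S.IsSubquandle A := by
        refine ⟨⟨a, haA⟩, ?_, ?_⟩
        · intro x hx y hy
          have : S.op x y = y := by
            rw [hx y, ← hy y, S.op_self]
          rw [this]; exact hy
        · intro x hx y hy
          have : S.invOp x y = y := by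
            have : S.op x y = y := by rw [hx y, ← hy y, S.op_self]
            conv_lhs => rw [← this]
            exact S.inv_op x y
          rw [this]; exact hy
      have hproj : ∀ x ∈ A, ∀ y ∈ A, S.op x y = y := by
        intro x hx y hy
        rw [hx y, ← hy y, S.op_self]
      exact (h2 A hsub hproj b hbA a haA).symm
    tfae_have 1 → 3 := by
      intro hf a b c h
      simp only at h
      exact hf b c (S.L_eq_of_eq_at hsr h)
    tfae_have 3 → 1 := by
      intro h3 a b hab
      have : S.op b a = S.op a a := by rw [← hab a]
      exact (h3 a this).symm
    tfae_finish
end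

section
/- Let Q = Aff(A,f) be an affine quandle. Then Q is latin if and only if Q is connected and faithful. Moreover, if Q is finite and connected, then Q is latin. -/
universe u v

section Statement6Aux

variable {A : Type u} [AddCommGroup A] (f : A ≃+ A)

/-- The displacement map `g(a) = a - f a` as an additive homomorphism. -/
private def gmap : A →+ A := AddMonoidHom.id A - (f : A →+ A)

private lemma gmap_apply (a : A) : gmap f a = a - f a := rfl

private lemma aff_op (a b : A) : (affineQuandle f).op a b = gmap f a + f b := rfl

private lemma aff_L (a b : A) : (affineQuandle f).L a b = gmap f a + f b := rfl

private lemma aff_Linv (a b : A) :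
    ((affineQuandle f).L a)⁻¹ b = f.symm (b - a + f a) := rfl

private lemma aff_gen (a b x : A) :
    ((affineQuandle f).L a * ((affineQuandle f).L b)⁻¹) x
      = x + (gmap f a - gmap f b) := by
  rw [Equiv.Perm.mul_apply, aff_Linv, aff_L, AddEquiv.apply_symm_apply,
    gmap_apply, gmap_apply]
  abel

/-- Translations by elements of the range of `gmap`, as a subgroup of permutations. -/
private def transSub : Subgroup (Equiv.Perm A) where
  carrier := { π | ∃ t ∈ Set.range (gmap f), ∀ x, π x = x + t }
  one_mem' := ⟨0, ⟨0, map_zero _⟩, fun x => by simp⟩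
  mul_mem' := by
    rintro π σ ⟨t, ⟨u, hu⟩, hπ⟩ ⟨s, ⟨v, hv⟩, hσ⟩
    exact ⟨s + t, ⟨v + u, by rw [map_add, hu, hv]⟩,
      fun x => by rw [Equiv.Perm.mul_apply, hσ, hπ, add_assoc]⟩
  inv_mem' := by
    rintro π ⟨t, ⟨u, hu⟩, hπ⟩
    refine ⟨-t, ⟨-u, by rw [map_neg, hu]⟩, fun x => ?_⟩
    apply π.injective
    rw [Equiv.Perm.inv_def, Equiv.apply_symm_apply, hπ]
    abel

private lemma dis_le_transSub : (affineQuandle f).Dis ≤ transSub f := by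
  apply Subgroup.closure_le _ |>.mpr
  rintro g ⟨a, b, rfl⟩
  exact ⟨gmap f a - gmap f b, ⟨a - b, by rw [map_sub]⟩, fun x => aff_gen f a b x⟩

private lemma conn_iff :
    (affineQuandle f).IsConnected ↔ Function.Surjective (gmap f) := by
  constructor
  · intro hc y
    obtain ⟨g, hg, hgy⟩ := hc 0 y
    obtain ⟨t, ⟨u, hu⟩, hπ⟩ := dis_le_transSub f hg
    exact ⟨u, by rw [hu]; rw [hπ 0, zero_add] at hgy; exact hgy⟩
  · intro hs a b
    obtain ⟨c, hc⟩ := hs (b - a)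
    refine ⟨(affineQuandle f).L c * ((affineQuandle f).L 0)⁻¹, ?_, ?_⟩
    · exact Subgroup.subset_closure ⟨c, 0, rfl⟩
    · rw [aff_gen, map_zero, sub_zero, hc]; abel

private lemma faithful_iff :
    (affineQuandle f).IsFaithful ↔ Function.Injective (gmap f) := by
  constructor
  · intro hf a b hab
    exact hf a b fun c => by rw [aff_op, aff_op, hab]
  · intro hi a b hab
    apply hi
    have := hab 0
    rw [aff_op, aff_op] at this
    exact add_right_cancel this
  
private lemma latin_iff :
    (affineQuandle f).IsLatin ↔ Function.Bijective (gmap f) := by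
  constructor
  · intro hl
    have h := hl 0
    have : (fun b => (affineQuandle f).op b 0) = fun b => gmap f b + f 0 := by
      funext b; rw [aff_op]
    rw [this] at h
    have := (Equiv.addRight (f 0)).symm.bijective.comp h
    convert this using 1
    funext b
    simp
    rfl
  · intro hb a
    have : (fun b => (affineQuandle f).op b a) = (fun y => y + f a) ∘ gmap f := by
      funext b; rw [aff_op]; rfl
    rw [this]
    exact (Equiv.addRight (f a)).bijective.comp hb

end Statement6Aux

/-- An affine quandle `Aff(A, f)` is latin if and only if it is connected
and faithful; moreover, a finite connected affine quandle is latin. -/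
theorem statement6 {A : Type u} [AddCommGroup A] (f : A ≃+ A) :
    ((affineQuandle f).IsLatin ↔
      ((affineQuandle f).IsConnected ∧ (affineQuandle f).IsFaithful)) ∧
    (Finite A → (affineQuandle f).IsConnected → (affineQuandle f).IsLatin) := by
  rw [latin_iff, conn_iff, faithful_iff]
  constructor
  · exact ⟨fun h => ⟨h.2, h.1⟩, fun h => ⟨h.2, h.1⟩⟩
  · intro _ hs
    exact ⟨Finite.injective_iff_surjective.mpr hs, hs⟩
end

section
/- Let Q = Q_Hom(G,f) be a principal quandle which is connected. Then the automorphism group Aut(Q) is isomorphic to the semidirect product G ⋊ C_{Aut(G)}(f), where C_{Aut(G)}(f) = {g ∈ Aut(G) : g∘f = f∘g} is the centralizer of f in Aut(G), acting on G in the natural way. -/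
universe u v

section Aux
variable {G : Type u} [Group G] (f : MulAut G)

/-- translation hom -/
def trHom : G →* Equiv.Perm G where
  toFun g := Equiv.mulLeft g
  map_one' := by ext x; simp
  map_mul' a b := by ext x; simp [mul_assoc]

@[simp] lemma trHom_apply (g x : G) : trHom g x = g * x := rfl

lemma gen_eq (a b : G) : (principalQuandle f).L a * ((principalQuandle f).L b)⁻¹
    = trHom (a * f (a⁻¹ * b) * b⁻¹) := by
  ext x
  show a * f (a⁻¹ * (b * f.symm (b⁻¹ * x))) = a * f (a⁻¹ * b) * b⁻¹ * x
  rw [← mul_assoc a⁻¹ b, map_mul, MulEquiv.apply_symm_apply]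
  group

lemma dis_le : (principalQuandle f).Dis ≤ (trHom (G := G)).range := by
  apply Subgroup.closure_le _ |>.mpr
  rintro g ⟨a, b, rfl⟩
  exact ⟨a * f (a⁻¹ * b) * b⁻¹, (gen_eq f a b).symm⟩

lemma dis_eq_tr {d : Equiv.Perm G} (hd : d ∈ (principalQuandle f).Dis) :
    d = trHom (d 1) := by
  obtain ⟨e, he⟩ := dis_le f hd
  have : e = d 1 := by rw [← he]; simp
  rw [← this, ← he]

lemma tr_mem_aut (g : G) : trHom g ∈ (principalQuandle f).autGroup := by
  intro a b
  show g * (a * f (a⁻¹ * b)) = g * a * f ((g * a)⁻¹ * (g * b))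
  rw [mul_inv_rev, mul_assoc a⁻¹ g⁻¹, inv_mul_cancel_left, mul_assoc]

lemma conj_L (h : Equiv.Perm G) (hh : h ∈ (principalQuandle f).autGroup) (a : G) :
    h * (principalQuandle f).L a * h⁻¹ = (principalQuandle f).L (h a) := by
  ext x
  show h ((principalQuandle f).op a (h⁻¹ x)) = (principalQuandle f).op (h a) x
  rw [hh]; simp

lemma conj_dis (h : Equiv.Perm G) (hh : h ∈ (principalQuandle f).autGroup)
    {d : Equiv.Perm G} (hd : d ∈ (principalQuandle f).Dis) :
    h * d * h⁻¹ ∈ (principalQuandle f).Dis := by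
  induction hd using Subgroup.closure_induction with
  | mem x hx =>
      obtain ⟨a, b, rfl⟩ := hx
      have : h * ((principalQuandle f).L a * ((principalQuandle f).L b)⁻¹) * h⁻¹
          = (principalQuandle f).L (h a) * ((principalQuandle f).L (h b))⁻¹ := by
        rw [← conj_L f h hh a, ← conj_L f h hh b]
        group
      rw [this]
      exact Subgroup.subset_closure ⟨h a, h b, rfl⟩
  | one => simpa using one_mem _
  | mul x y hx hy px py =>
      have : h * (x * y) * h⁻¹ = (h * x * h⁻¹) * (h * y * h⁻¹) := by group
      rw [this]; exact mul_mem px py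
  | inv x hx px =>
      have : h * x⁻¹ * h⁻¹ = (h * x * h⁻¹)⁻¹ := by group
      rw [this]; exact inv_mem px

lemma aut_mul (hc : (principalQuandle f).IsConnected) (h : Equiv.Perm G) (hh : h ∈ (principalQuandle f).autGroup)
    (h1 : h 1 = 1) (g x : G) : h (g * x) = h g * h x := by
  obtain ⟨d, hd, hd1⟩ := hc 1 g
  have hdtr : d = trHom g := by rw [dis_eq_tr f hd, hd1]
  have hmem := conj_dis f h hh hd
  have hcval : h * d * h⁻¹ = trHom (h g) := by
    have := dis_eq_tr f hmem
    rw [this]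
    congr 1
    show h (d (h⁻¹ 1)) = h g
    have : h⁻¹ (1 : G) = 1 := by
      conv_lhs => rw [← h1]
      exact h.symm_apply_apply 1
    rw [this, hdtr]; simp
  have := congrArg (fun p : Equiv.Perm G => p (h x)) hcval
  simpa [hdtr, h.symm_apply_apply] using this

lemma aut_comm_f (h : Equiv.Perm G) (hh : h ∈ (principalQuandle f).autGroup)
    (h1 : h 1 = 1) (x : G) : h (f x) = f (h x) := by
  have := hh 1 x
  simpa [principalQuandle, h1] using this

end Aux



section Main
variable {G : Type u} [Group G] (f : MulAut G)

def phi1 : G →* ↥(principalQuandle f).autGroup where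
  toFun g := ⟨trHom g, tr_mem_aut f g⟩
  map_one' := Subtype.ext (map_one trHom)
  map_mul' a b := Subtype.ext (map_mul trHom a b)

@[simp] lemma phi1_coe (g : G) : ((phi1 f g : ↥(principalQuandle f).autGroup) : Equiv.Perm G) = trHom g := rfl

lemma mulaut_comm (θ : MulAut G) (hθ : θ ∈ Subgroup.centralizer ({f} : Set (MulAut G)))
    (x : G) : f (θ x) = θ (f x) := by
  have h := Subgroup.mem_centralizer_iff.mp hθ f (by simp)
  have := congrArg (fun p : MulAut G => p x) h
  simpa using this

lemma mulaut_mem_aut (θ : MulAut G) (hcm : ∀ x, f (θ x) = θ (f x)) :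
    θ.toEquiv ∈ (principalQuandle f).autGroup := by
  intro a b
  show θ (a * f (a⁻¹ * b)) = θ a * f ((θ a)⁻¹ * θ b)
  rw [map_mul, ← hcm, map_mul, map_inv]

def phi2 : ↥(Subgroup.centralizer ({f} : Set (MulAut G))) →* ↥(principalQuandle f).autGroup where
  toFun θ := ⟨(θ : MulAut G).toEquiv, mulaut_mem_aut f _ (mulaut_comm f _ θ.2)⟩
  map_one' := Subtype.ext (by ext x; rfl)
  map_mul' a b := Subtype.ext (by ext x; rfl)

@[simp] lemma phi2_coe_apply (θ : ↥(Subgroup.centralizer ({f} : Set (MulAut G)))) (x : G) :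
    ((phi2 f θ : ↥(principalQuandle f).autGroup) : Equiv.Perm G) x = (θ : MulAut G) x := rfl

lemma compat : ∀ θ : ↥(Subgroup.centralizer ({f} : Set (MulAut G))),
    (phi1 f).comp ((Subgroup.centralizer ({f} : Set (MulAut G))).subtype θ).toMonoidHom
      = (MulAut.conj (phi2 f θ)).toMonoidHom.comp (phi1 f) := by
  intro θ
  ext g x
  show (θ : MulAut G) g * x = ((phi2 f θ : ↥(principalQuandle f).autGroup) : Equiv.Perm G)
    ((trHom g) (((phi2 f θ : ↥(principalQuandle f).autGroup) : Equiv.Perm G)⁻¹ x))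
  rw [Equiv.Perm.inv_def]
  have h1 : ((phi2 f θ : ↥(principalQuandle f).autGroup) : Equiv.Perm G)
      ((trHom g) ((Equiv.symm ((phi2 f θ : ↥(principalQuandle f).autGroup) : Equiv.Perm G)) x))
      = (θ : MulAut G) (g * ((θ : MulAut G) : G ≃ G).symm x) := rfl
  rw [h1, map_mul]
  congr 1
  exact (Equiv.apply_symm_apply ((θ : MulAut G) : G ≃ G) x).symm

end Main

/-- For a connected principal quandle `Q = Q_Hom(G, f)`, the automorphism
group of `Q` is isomorphic to the semidirect product `G ⋊ C_{Aut(G)}(f)`, where the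
centralizer of `f` in `Aut(G)` acts on `G` in the natural way. -/
theorem statement7 {G : Type u} [Group G] (f : MulAut G)
    (hc : (principalQuandle f).IsConnected) :
    Nonempty
      ((↥(principalQuandle f).autGroup) ≃*
        SemidirectProduct G (↥(Subgroup.centralizer ({f} : Set (MulAut G))))
          (Subgroup.centralizer ({f} : Set (MulAut G))).subtype) := by
  set C := Subgroup.centralizer ({f} : Set (MulAut G)) with hC
  let Phi := SemidirectProduct.lift (phi1 f) (phi2 f) (compat f)
  have hPhi : ∀ p : SemidirectProduct G (↥C) C.subtype,
      ((Phi p : ↥(principalQuandle f).autGroup) : Equiv.Perm G)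
        = trHom p.left * ((p.right : MulAut G) : G ≃ G) := by
    intro p
    rfl
  have hinj : Function.Injective Phi := by
    rw [injective_iff_map_eq_one]
    intro p hp
    have hperm : trHom p.left * ((p.right : MulAut G) : G ≃ G) = 1 := by
      rw [← hPhi p, hp]; rfl
    have h1 : p.left = 1 := by
      have := congrArg (fun q : Equiv.Perm G => q 1) hperm
      simpa using this
    have h2 : p.right = 1 := by
      have hperm2 : ((p.right : MulAut G) : G ≃ G) = 1 := by
        rwa [h1, map_one, one_mul] at hperm
      ext x
      exact congrArg (fun q : Equiv.Perm G => q x) hperm2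
    exact SemidirectProduct.ext h1 h2
  have hsurj : Function.Surjective Phi := by
    rintro ⟨h, hh⟩
    set g : G := h 1 with hg
    set tp : Equiv.Perm G := trHom g⁻¹ * h with htp
    have htpmem : tp ∈ (principalQuandle f).autGroup :=
      mul_mem (tr_mem_aut f g⁻¹) hh
    have htp1 : tp 1 = 1 := by
      show g⁻¹ * h 1 = 1
      rw [← hg, inv_mul_cancel]
    have htpmul : ∀ a b : G, tp (a * b) = tp a * tp b :=
      aut_mul f hc tp htpmem htp1
    let θ : MulAut G := MulEquiv.mk' tp htpmul
    have hθmem : θ ∈ C := by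
      rw [hC]
      refine Subgroup.mem_centralizer_iff.mpr ?_
      rintro k hk
      rw [Set.mem_singleton_iff.mp hk]
      ext x
      show f (tp x) = tp (f x)
      exact (aut_comm_f f tp htpmem htp1 x).symm
    refine ⟨⟨g, ⟨θ, hθmem⟩⟩, ?_⟩
    apply Subtype.ext
    rw [hPhi]
    ext x
    show g * (g⁻¹ * h x) = h x
    rw [mul_inv_cancel_left]
  exact ⟨(MulEquiv.ofBijective Phi ⟨hinj, hsurj⟩).symm⟩
end

section
/- Let Q = Q_Hom(G,f) be a principal quandle. For a subgroup N ≤ G, let ∼_N be the relation a ∼_N b iff a⁻¹b ∈ N, let [N,f] be the subgroup of G generated by {n·f(n)⁻¹ : n ∈ N}, and let Core_G(N) be the largest normal subgroup of G contained in N. If f(N) = N and [N,f] ≤ Core_G(N), then ∼_N is a congruence of Q. Conversely, if Q is connected, then every congruence of Q equals ∼_N for some subgroup N ≤ G with f(N) = N and [N,f] ≤ Core_G(N). -/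
universe u v

/-- For a principal quandle `Q_Hom(G, f)` and a subgroup `N ≤ G` with
`f(N) = N` and `[N, f] ≤ Core_G(N)`, the relation `a ∼_N b ↔ a⁻¹b ∈ N` is a congruence;
conversely, if the quandle is connected, every congruence is of this form. -/
theorem statement8 {G : Type u} [Group G] (f : G ≃* G) :
    (∀ N : Subgroup G, Subgroup.map f.toMonoidHom N = N →
      Subgroup.closure { x : G | ∃ n ∈ N, x = n * (f n)⁻¹ } ≤ N.normalCore →
      (principalQuandle f).IsCongruence (fun a b => a⁻¹ * b ∈ N)) ∧
    ((principalQuandle f).IsConnected →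
      ∀ r : G → G → Prop, (principalQuandle f).IsCongruence r →
        ∃ N : Subgroup G, Subgroup.map f.toMonoidHom N = N ∧
          Subgroup.closure { x : G | ∃ n ∈ N, x = n * (f n)⁻¹ } ≤ N.normalCore ∧
          ∀ a b : G, r a b ↔ a⁻¹ * b ∈ N) := by
  constructor
  · -- forward direction
    intro N hfN hcore
    have hfmem : ∀ n ∈ N, f n ∈ N := by
      intro n hn
      rw [← hfN]
      exact Subgroup.mem_map_of_mem _ hn
    have hfsymm : ∀ n ∈ N, f.symm n ∈ N := by
      intro n hn
      rw [← hfN] at hn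
      obtain ⟨m, hm, hfm⟩ := hn
      have hsm : f.symm n = m := by apply f.injective; simpa using hfm.symm
      rwa [hsm]
    have hkey : ∀ n ∈ N, n * (f n)⁻¹ ∈ N.normalCore := fun n hn =>
      hcore (Subgroup.subset_closure ⟨n, hn, rfl⟩)
    have hkey' : ∀ n ∈ N, n * (f.symm n)⁻¹ ∈ N.normalCore := by
      intro n hn
      have h1 := hkey (f.symm n) (hfsymm n hn)
      rw [f.apply_symm_apply] at h1
      have h2 := N.normalCore.inv_mem h1
      rwa [mul_inv_rev, inv_inv] at h2
    constructor
    · intro a; simpa using N.one_mem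
    · intro a b h
      have := N.inv_mem h
      rwa [mul_inv_rev, inv_inv] at this
    · intro a b c h1 h2
      have := N.mul_mem h1 h2
      rwa [mul_assoc, mul_inv_cancel_left] at this
    · intro a b c d hab hcd
      show ((principalQuandle f).op a c)⁻¹ * ((principalQuandle f).op b d) ∈ N
      have hE : ((principalQuandle f).op a c)⁻¹ * ((principalQuandle f).op b d) =
          (f (a⁻¹ * c))⁻¹ * ((a⁻¹ * b) * (f (a⁻¹ * b))⁻¹) * f (a⁻¹ * c) * f (c⁻¹ * d) := by
        show (a * f (a⁻¹ * c))⁻¹ * (b * f (b⁻¹ * d)) = _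
        have hbd : b⁻¹ * d = (a⁻¹ * b)⁻¹ * (a⁻¹ * c) * (c⁻¹ * d) := by group
        rw [hbd]
        simp only [map_mul, map_inv]
        group
      rw [hE]
      refine N.mul_mem (Subgroup.normalCore_le N ?_) (hfmem _ hcd)
      have := (N.normalCore_normal).conj_mem _ (hkey _ hab) (f (a⁻¹ * c))⁻¹
      rwa [inv_inv] at this
    · intro a b c d hab hcd
      show ((principalQuandle f).invOp a c)⁻¹ * ((principalQuandle f).invOp b d) ∈ N
      have hE : ((principalQuandle f).invOp a c)⁻¹ * ((principalQuandle f).invOp b d) =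
          (f.symm (a⁻¹ * c))⁻¹ * ((a⁻¹ * b) * (f.symm (a⁻¹ * b))⁻¹) * f.symm (a⁻¹ * c) *
            f.symm (c⁻¹ * d) := by
        show (a * f.symm (a⁻¹ * c))⁻¹ * (b * f.symm (b⁻¹ * d)) = _
        have hbd : b⁻¹ * d = (a⁻¹ * b)⁻¹ * (a⁻¹ * c) * (c⁻¹ * d) := by group
        rw [hbd]
        simp only [map_mul, map_inv]
        group
      rw [hE]
      refine N.mul_mem (Subgroup.normalCore_le N ?_) (hfsymm _ hcd)
      have := (N.normalCore_normal).conj_mem _ (hkey' _ hab) (f.symm (a⁻¹ * c))⁻¹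
      rwa [inv_inv] at this
  · -- converse direction
    intro hconn r hr
    -- left multiplications preserve the congruence
    have hL : ∀ a x y : G, r x y ↔ r ((principalQuandle f).op a x) ((principalQuandle f).op a y) := by
      intro a x y
      constructor
      · exact fun h => hr.op_compat (hr.refl a) h
      · intro h
        have := hr.invOp_compat (hr.refl a) h
        rwa [(principalQuandle f).inv_op, (principalQuandle f).inv_op] at this
    -- the subgroup of permutations preserving r
    let P : Subgroup (Equiv.Perm G) :=
      { carrier := {h : Equiv.Perm G | ∀ x y : G, r x y ↔ r (h x) (h y)}
        one_mem' := fun _ _ => Iff.rfl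
        mul_mem' := fun {g h} hg hh x y => (hh x y).trans (hg _ _)
        inv_mem' := fun {g} hg x y => by
          have := (hg (g⁻¹ x) (g⁻¹ y)).symm
          simpa using this }
    have hDisP : (principalQuandle f).Dis ≤ P := by
      apply (Subgroup.closure_le P).2
      rintro g ⟨a, b, rfl⟩
      exact P.mul_mem (hL a) (P.inv_mem (hL b))
    -- the subgroup of permutations that are left translations
    let P2 : Subgroup (Equiv.Perm G) :=
      { carrier := {h : Equiv.Perm G | ∀ x : G, h x = h 1 * x}
        one_mem' := fun x => by simp
        mul_mem' := fun {g h} hg hh x => by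
          rw [Equiv.Perm.mul_apply, Equiv.Perm.mul_apply, hh x, hg (h 1 * x), hg (h 1), mul_assoc]
        inv_mem' := fun {g} hg x => by
          have e1 : g⁻¹ 1 = (g 1)⁻¹ := by
            apply g.injective
            rw [← Equiv.Perm.mul_apply, mul_inv_cancel, Equiv.Perm.one_apply, hg (g 1)⁻¹, mul_inv_cancel]
          apply g.injective
          rw [← Equiv.Perm.mul_apply, mul_inv_cancel, Equiv.Perm.one_apply, e1, hg ((g 1)⁻¹ * x), mul_inv_cancel_left] }
    have hgen : ∀ a b : G, ∀ x : G,
        ((principalQuandle f).L a * ((principalQuandle f).L b)⁻¹) x =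
          a * f (a⁻¹ * b) * b⁻¹ * x := by
      intro a b x
      show a * f (a⁻¹ * (b * f.symm (b⁻¹ * x))) = a * f (a⁻¹ * b) * b⁻¹ * x
      simp only [map_mul, MulEquiv.apply_symm_apply]
      group
    have hDisP2 : (principalQuandle f).Dis ≤ P2 := by
      apply (Subgroup.closure_le P2).2
      rintro g ⟨a, b, rfl⟩
      intro x
      rw [hgen, hgen]
      group
    -- translation invariance
    have htrans : ∀ g x y : G, r x y ↔ r (g * x) (g * y) := by
      intro g x y
      obtain ⟨h, hh, hh1⟩ := hconn 1 g
      have h2 := hDisP2 hh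
      have h3 := hDisP hh x y
      rw [h2 x, h2 y, hh1] at h3
      exact h3
    -- the congruence class of 1
    refine ⟨{ carrier := {x : G | r 1 x}
              one_mem' := hr.refl 1
              mul_mem' := fun {x y} hx hy => by
                refine hr.trans hx ?_
                have := (htrans x 1 y).1 hy
                rwa [mul_one] at this
              inv_mem' := fun {x} hx => by
                have := (htrans x⁻¹ 1 x).1 hx
                rw [mul_one, inv_mul_cancel] at this
                exact hr.symm this }, ?_, ?_, ?_⟩
    · -- f(N) = N
      ext x
      simp only [Subgroup.mem_map]
      constructor
      · rintro ⟨y, hy, rfl⟩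
        have := hr.op_compat (hr.refl 1) hy
        simpa [principalQuandle] using this
      · intro hx
        refine ⟨f.symm x, ?_, f.apply_symm_apply x⟩
        have := hr.invOp_compat (hr.refl 1) hx
        simpa [principalQuandle] using this
    · -- closure ≤ normalCore
      apply (Subgroup.closure_le _).2
      rintro x ⟨n, hn, rfl⟩
      show ∀ g : G, g * (n * (f n)⁻¹) * g⁻¹ ∈ _
      intro g
      have h2 := hr.op_compat hn (hr.refl (f.symm g⁻¹))
      simp only [principalQuandle] at h2
      have e1 : (1 : G) * f ((1 : G)⁻¹ * f.symm g⁻¹) = g⁻¹ := by simp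
      have e2 : n * f (n⁻¹ * f.symm g⁻¹) = n * (f n)⁻¹ * g⁻¹ := by
        simp only [map_mul, map_inv, MulEquiv.apply_symm_apply]
        group
      rw [e1, e2] at h2
      have h3 := (htrans g _ _).1 h2
      rw [mul_inv_cancel] at h3
      have e4 : g * (n * (f n)⁻¹ * g⁻¹) = g * (n * (f n)⁻¹) * g⁻¹ := by group
      rwa [e4] at h3
    · -- r a b ↔ a⁻¹ * b ∈ N
      intro a b
      have := htrans a⁻¹ a b
      rwa [inv_mul_cancel] at this
end
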